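/- Let q ≥ 2 be an integer, let A be a symmetric q×q complex matrix, let G = (V,E) be a finite simple graph, and let σ : Λ → [q] be a boundary condition on Λ ⊆ V. Let Γ be the graph whose vertices are the connected subgraphs H = (S,F) of G with at least one edge, with H₁ = (S₁,F₁) and H₂ = (S₂,F₂) adjacent iff S₁ ∩ S₂ ≠ ∅ (and H₁ ≠ H₂). For a complex variable z and external fields ξ ∈ ℂ^{V×[q]}, define the weight w^σ(H) = z^{|F|} · Z^σ_H(A−J, ξ) / ((∏_{v ∈ S∖Λ} ∑_{i=1}^q ξ_{v,i}) · ∏_{v ∈ Λ∩S} ξ_{v,σ(v)}) (σ restricted to Λ∩S), and set p^σ(ξ) = (∏_{v ∈ V∖Λ} ∑_{i=1}^q ξ_{v,i}) · ∏_{v ∈ Λ} ξ_{v,σ(v)}. Then, as an identity of rational functions in z and ξ (valid whenever all denominators are nonzero), p^σ(ξ) · Z_Γ(w^σ) = Z^σ_G(J + z(A−J), ξ). -/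

import Mathlib

open Finset

noncomputable section

namespace GraphHom

open scoped Classical

variable {V : Type*} {q : ℕ}

/-- The weight of an (unordered) edge `e` under the coloring `ψ` and the matrix `B`.
For a symmetric matrix `B` and `e = {u,w}` this is exactly `B (ψ u) (ψ w)`. -/
def edgeWeight {R : Type*} [Field R] (B : Matrix (Fin q) (Fin q) R) (ψ : V → Fin q)
    (e : Sym2 V) : R :=
  Sym2.lift ⟨fun u w => (B (ψ u) (ψ w) + B (ψ w) (ψ u)) / 2, fun u w => by ring⟩ e

/-- The edges of `G` as a `Finset`. -/
def edges [Fintype V] (G : SimpleGraph V) : Finset (Sym2 V) :=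
  G.edgeSet.toFinite.toFinset

/-- The graph homomorphism partition function with boundary condition `σ` on `Λ`:
`Z^σ_G(B) = ∑_{ψ : V → [q], ψ|_Λ = σ|_Λ} ∏_{uv ∈ E} B_{ψ(u),ψ(v)}`. -/
def Zcond {R : Type*} [Field R] [Fintype V] (G : SimpleGraph V)
    (B : Matrix (Fin q) (Fin q) R) (Λ : Finset V) (σ : V → Fin q) : R :=
  ∑ ψ : V → Fin q, if ∀ u ∈ Λ, ψ u = σ u then ∏ e ∈ edges G, edgeWeight B ψ e else 0

/-- The interpolation matrix `J + z(A − J)`, i.e. the matrix with entries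
`1 + z(A_{ij} − 1)`, for a real matrix `A`. -/
def intMat (A : Matrix (Fin q) (Fin q) ℝ) (z : ℂ) : Matrix (Fin q) (Fin q) ℂ :=
  fun i j => 1 + z * ((A i j : ℂ) - 1)

/-- The ratio `P^σ_{G,v,i;A}(z) = Z^{σ_{v,i}}_G(J + z(A−J)) / Z^σ_G(J + z(A−J))`. -/
def ratio [Fintype V] (G : SimpleGraph V) (A : Matrix (Fin q) (Fin q) ℝ)
    (Λ : Finset V) (σ : V → Fin q) (v : V) (i : Fin q) (z : ℂ) : ℂ :=
  Zcond G (intMat A z) (insert v Λ) (Function.update σ v i) / Zcond G (intMat A z) Λ σ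

/-- The conditional probability `Pr_μ[Ψ(v) = i ∣ σ]` in the graph homomorphism measure
`μ_{G,A}`:  `Z^{σ_{v,i}}_G(A) / Z^σ_G(A)`. -/
def condProb [Fintype V] (G : SimpleGraph V) (A : Matrix (Fin q) (Fin q) ℝ)
    (Λ : Finset V) (σ : V → Fin q) (v : V) (i : Fin q) : ℝ :=
  Zcond G A (insert v Λ) (Function.update σ v i) / Zcond G A Λ σ

/-- `G` has maximum degree at most `Δ`. -/
def MaxDegLE [Fintype V] (G : SimpleGraph V) (Δ : ℕ) : Prop :=
  ∀ v : V, (univ.filter fun u => G.Adj v u).card ≤ Δ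

end GraphHom

namespace GraphHom
open scoped Classical

/-- The graph homomorphism partition function with external fields `ξ` and boundary
condition `σ` on `Λ`. -/
def Zext {R : Type*} [Field R] {V : Type*} {q : ℕ} [Fintype V] (G : SimpleGraph V)
    (B : Matrix (Fin q) (Fin q) R) (Λ : Finset V) (σ : V → Fin q)
    (ξ : V → Fin q → R) : R :=
  ∑ ψ : V → Fin q, if ∀ u ∈ Λ, ψ u = σ u then
      (∏ v, ξ v (ψ v)) * ∏ e ∈ edges G, edgeWeight B ψ e
    else 0

variable [Fintype V]

/-- The support of a finite set of edges: all vertices covered by some edge. -/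
def edgeSupp (F : Finset (Sym2 V)) : Finset V :=
  univ.filter fun v => ∃ e ∈ F, v ∈ e

/-- `F` determines a connected subgraph `H = (S, F)` of `G` with at least one edge,
where `S = edgeSupp F` (a connected subgraph with an edge is determined by its edge set). -/
def IsPolymer (G : SimpleGraph V) (F : Finset (Sym2 V)) : Prop :=
  F.Nonempty ∧ (F : Set (Sym2 V)) ⊆ G.edgeSet ∧
    ∀ u ∈ edgeSupp F, ∀ w ∈ edgeSupp F,
      (SimpleGraph.fromEdgeSet (F : Set (Sym2 V))).Reachable u w

/-- The partition function `Z^σ_H(B, ξ)` of the subgraph `H = (S, F)` of `G`, with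
boundary condition `σ` restricted to `Λ ∩ S`:  the sum runs over colorings of `S`
(encoded as colorings of `V` pinned to `σ` off `S`), with external-field weights taken
over the vertices of `S` only. -/
def Zsub {q : ℕ} (B : Matrix (Fin q) (Fin q) ℂ) (S : Finset V) (F : Finset (Sym2 V))
    (Λ : Finset V) (σ : V → Fin q) (ξ : V → Fin q → ℂ) : ℂ :=
  ∑ ψ : V → Fin q,
    if (∀ u ∈ Λ ∩ S, ψ u = σ u) ∧ (∀ u ∉ S, ψ u = σ u) then
      (∏ v ∈ S, ξ v (ψ v)) * ∏ e ∈ F, edgeWeight B ψ e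
    else 0

/-- The weight `w^σ(H)` of the polymer `H = (S, F)`, `S = edgeSupp F`:
`w^σ(H) = z^{|F|} Z^σ_H(A−J, ξ) / ((∏_{v ∈ S∖Λ} ∑_i ξ_{v,i}) ∏_{v ∈ Λ∩S} ξ_{v,σ(v)})`. -/
def polymerWeight {q : ℕ} (A : Matrix (Fin q) (Fin q) ℂ) (z : ℂ) (Λ : Finset V)
    (σ : V → Fin q) (ξ : V → Fin q → ℂ) (F : Finset (Sym2 V)) : ℂ :=
  z ^ F.card * Zsub (fun i j => A i j - 1) (edgeSupp F) F Λ σ ξ /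
    ((∏ v ∈ edgeSupp F \ Λ, ∑ i, ξ v i) * ∏ v ∈ Λ ∩ edgeSupp F, ξ v (σ v))

/-- `p^σ(ξ) = (∏_{v ∈ V∖Λ} ∑_i ξ_{v,i}) · ∏_{v ∈ Λ} ξ_{v,σ(v)}`. -/
def pBC {q : ℕ} (Λ : Finset V) (σ : V → Fin q) (ξ : V → Fin q → ℂ) : ℂ :=
  (∏ v ∈ univ \ Λ, ∑ i, ξ v i) * ∏ v ∈ Λ, ξ v (σ v)

/-- The multivariate independence polynomial `Z_Γ(w)` of the polymer graph `Γ` of `G`: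
vertices of `Γ` are the polymers of `G` (connected subgraphs with at least one edge),
two polymers being adjacent iff their vertex sets intersect; independent sets of `Γ`
are families of pairwise vertex-disjoint polymers. -/
def Zpolymer (G : SimpleGraph V) (w : Finset (Sym2 V) → ℂ) : ℂ :=
  ∑ 𝒥 : Finset (Finset (Sym2 V)),
    if (∀ F ∈ 𝒥, IsPolymer G F) ∧
        (∀ F₁ ∈ 𝒥, ∀ F₂ ∈ 𝒥, F₁ ≠ F₂ → Disjoint (edgeSupp F₁) (edgeSupp F₂)) then
      ∏ F ∈ 𝒥, w F
    else 0

section Aux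
variable {q : ℕ}

lemma sum_pin_mul (σ : V → Fin q) (T₁ T₂ : Finset V) (hT : Disjoint T₁ T₂)
    (f₁ f₂ : (V → Fin q) → ℂ)
    (h₁ : ∀ ψ ψ' : V → Fin q, (∀ v, v ∉ T₂ → ψ v = ψ' v) → f₁ ψ = f₁ ψ')
    (h₂ : ∀ ψ ψ' : V → Fin q, (∀ v, v ∉ T₁ → ψ v = ψ' v) → f₂ ψ = f₂ ψ') :
    (∑ ψ : V → Fin q, if ∀ u, u ∉ T₁ → u ∉ T₂ → ψ u = σ u then f₁ ψ * f₂ ψ else 0) =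
    (∑ ψ : V → Fin q, if ∀ u ∉ T₁, ψ u = σ u then f₁ ψ else 0) *
    (∑ ψ : V → Fin q, if ∀ u ∉ T₂, ψ u = σ u then f₂ ψ else 0) := by
  rw [← Finset.sum_filter, ← Finset.sum_filter, ← Finset.sum_filter,
    Finset.sum_mul_sum, ← Finset.sum_product']
  refine Finset.sum_nbij' (fun ψ => ((fun v => if v ∈ T₁ then ψ v else σ v),
      (fun v => if v ∈ T₂ then ψ v else σ v)))
    (fun p => fun v => if v ∈ T₁ then p.1 v else p.2 v) ?_ ?_ ?_ ?_ ?_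
  · intro ψ hψ
    simp only [Finset.mem_filter, Finset.mem_univ, true_and] at hψ ⊢
    rw [Finset.mem_product]
    constructor
    · simp only [Finset.mem_filter, Finset.mem_univ, true_and]
      intro u hu; simp [hu]
    · simp only [Finset.mem_filter, Finset.mem_univ, true_and]
      intro u hu; simp [hu]
  · intro p hp
    simp only [Finset.mem_product, Finset.mem_filter, Finset.mem_univ, true_and] at hp
    simp only [Finset.mem_filter, Finset.mem_univ, true_and]
    intro u hu1 hu2
    simp [hu1, hp.2 u hu2]
  · intro ψ hψ
    simp only [Finset.mem_filter, Finset.mem_univ, true_and] at hψ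
    funext v
    by_cases h1 : v ∈ T₁
    · simp [h1]
    · by_cases h2 : v ∈ T₂
      · simp [h1, h2]
      · simp only [if_neg h1, if_neg h2]
        exact (hψ v h1 h2).symm
  · intro p hp
    simp only [Finset.mem_product, Finset.mem_filter, Finset.mem_univ, true_and] at hp
    obtain ⟨hp1, hp2⟩ := hp
    have e1 : (fun v => if v ∈ T₁ then (if v ∈ T₁ then p.1 v else p.2 v) else σ v) = p.1 := by
      funext v
      by_cases h1 : v ∈ T₁
      · simp [h1]
      · simp only [if_neg h1]; exact (hp1 v h1).symm
    have e2 : (fun v => if v ∈ T₂ then (if v ∈ T₁ then p.1 v else p.2 v) else σ v) = p.2 := by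
      funext v
      by_cases h2 : v ∈ T₂
      · have h1 : v ∉ T₁ := Finset.disjoint_right.mp hT h2
        simp [h1, h2]
      · simp only [if_neg h2]; exact (hp2 v h2).symm
    exact Prod.ext e1 e2
  · intro ψ hψ
    simp only [Finset.mem_filter, Finset.mem_univ, true_and] at hψ
    congr 1
    · exact h₁ ψ _ (fun v hv => by
        by_cases h1 : v ∈ T₁
        · simp [h1]
        · simp [h1, hψ v h1 hv])
    · exact h₂ ψ _ (fun v hv => by
        by_cases h2 : v ∈ T₂
        · simp [h2]
        · by_cases h1 : v ∈ T₁
          · exact absurd h1 hv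
          · simp [h2, hψ v h1 h2])

lemma sum_pin_empty (σ : V → Fin q) (f : (V → Fin q) → ℂ) :
    (∑ ψ : V → Fin q, if ∀ u, u ∉ (∅ : Finset V) → ψ u = σ u then f ψ else 0) = f σ := by
  rw [Finset.sum_eq_single σ]
  · simp
  · intro ψ _ hne
    rw [if_neg]
    intro h
    exact hne (funext fun v => h v (Finset.notMem_empty v))
  · simp

lemma sum_pin_prod {ι : Type*} (σ : V → Fin q) (𝒥 : Finset ι) (T : ι → Finset V)
    (f : ι → (V → Fin q) → ℂ)
    (hdisj : ∀ i ∈ 𝒥, ∀ j ∈ 𝒥, i ≠ j → Disjoint (T i) (T j))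
    (hdep : ∀ i ∈ 𝒥, ∀ ψ ψ' : V → Fin q,
      (∀ v, v ∉ 𝒥.sup T \ T i → ψ v = ψ' v) → f i ψ = f i ψ') :
    (∑ ψ : V → Fin q, if ∀ u, u ∉ 𝒥.sup T → ψ u = σ u then ∏ i ∈ 𝒥, f i ψ else 0) =
    ∏ i ∈ 𝒥, ∑ ψ : V → Fin q, if ∀ u, u ∉ T i → ψ u = σ u then f i ψ else 0 := by
  classical
  revert hdisj hdep
  induction 𝒥 using Finset.induction with
  | empty =>
    intro _ _
    rw [Finset.prod_empty, show (∅ : Finset ι).sup T = (∅ : Finset V) by simp]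
    have h := sum_pin_empty σ (fun _ : V → Fin q => (1:ℂ))
    simp only [Finset.prod_empty]
    exact h
  | @insert a s ha ih =>
    intro hdisj hdep
    have hTa : ∀ i ∈ s, Disjoint (T a) (T i) := fun i hi =>
      hdisj a (Finset.mem_insert_self a s) i (Finset.mem_insert_of_mem hi)
        (by rintro rfl; exact ha hi)
    have hd : Disjoint (T a) (s.sup T) := Finset.disjoint_sup_right.mpr hTa
    have hsub : s.sup T ⊆ (insert a s).sup T \ T a := by
      intro v hv
      rw [Finset.mem_sdiff]
      refine ⟨?_, fun hva => Finset.disjoint_right.mp hd hv hva⟩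
      rw [Finset.sup_insert, Finset.sup_eq_union]
      exact Finset.mem_union_right _ hv
    have key := sum_pin_mul σ (T a) (s.sup T) hd (f a) (fun ψ => ∏ i ∈ s, f i ψ)
      (fun ψ ψ' hag => hdep a (Finset.mem_insert_self a s) ψ ψ'
        (fun v hv => hag v (fun hv2 => hv (hsub hv2))))
      (fun ψ ψ' hag => Finset.prod_congr rfl (fun i hi =>
        hdep i (Finset.mem_insert_of_mem hi) ψ ψ' (fun v hv => by
          refine hag v (fun hva => hv ?_)
          rw [Finset.mem_sdiff]
          refine ⟨?_, fun hvi => Finset.disjoint_left.mp (hTa i hi) hva hvi⟩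
          rw [Finset.sup_insert, Finset.sup_eq_union]
          exact Finset.mem_union_left _ hva)))
    rw [Finset.prod_insert ha]
    have lhsEq : (∑ ψ : V → Fin q, if ∀ u, u ∉ (insert a s).sup T → ψ u = σ u
        then ∏ i ∈ insert a s, f i ψ else 0) =
        (∑ ψ : V → Fin q, if ∀ u, u ∉ T a → u ∉ s.sup T → ψ u = σ u
        then f a ψ * ∏ i ∈ s, f i ψ else 0) := by
      refine Finset.sum_congr rfl (fun ψ _ => ?_)
      refine if_congr ?_ (Finset.prod_insert ha) rfl
      constructor
      · intro h u hu1 hu2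
        refine h u (fun hmem => ?_)
        rw [Finset.sup_insert, Finset.sup_eq_union, Finset.mem_union] at hmem
        exact hmem.elim hu1 hu2
      · intro h u hu
        rw [Finset.sup_insert, Finset.sup_eq_union, Finset.mem_union] at hu
        push_neg at hu
        exact h u hu.1 hu.2
    rw [lhsEq, key]
    congr 1
    exact ih (fun i hi j hj hij => hdisj i (Finset.mem_insert_of_mem hi) j
        (Finset.mem_insert_of_mem hj) hij)
      (fun i hi ψ ψ' hag => hdep i (Finset.mem_insert_of_mem hi) ψ ψ' (fun v hv =>
        hag v (fun hmem => hv (by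
          rw [Finset.mem_sdiff] at hmem ⊢
          refine ⟨?_, hmem.2⟩
          rw [Finset.sup_insert, Finset.sup_eq_union]
          exact Finset.mem_union_right _ hmem.1))))

lemma sum_pin_single (σ : V → Fin q) (a : V) (g : Fin q → ℂ) :
    (∑ ψ : V → Fin q, if ∀ u, u ∉ ({a} : Finset V) → ψ u = σ u then g (ψ a) else 0) =
    ∑ i, g i := by
  rw [← Finset.sum_filter]
  refine Finset.sum_nbij' (fun ψ => ψ a) (fun i => Function.update σ a i) ?_ ?_ ?_ ?_ ?_
  · intro ψ _; exact Finset.mem_univ _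
  · intro i _
    simp only [Finset.mem_filter, Finset.mem_univ, true_and]
    intro u hu
    rw [Finset.mem_singleton] at hu
    rw [Function.update_of_ne hu]
  · intro ψ hψ
    simp only [Finset.mem_filter, Finset.mem_univ, true_and] at hψ
    funext v
    by_cases hv : v = a
    · subst hv; simp
    · show Function.update σ a (ψ a) v = ψ v
      rw [Function.update_of_ne hv]
      exact (hψ v (by simpa using hv)).symm
  · intro i _; simp
  · intro ψ _; rfl

lemma sum_pin_field (σ : V → Fin q) (T : Finset V) (g : V → Fin q → ℂ) :
    (∑ ψ : V → Fin q, if ∀ u, u ∉ T → ψ u = σ u then ∏ v ∈ T, g v (ψ v) else 0) =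
    ∏ v ∈ T, ∑ i, g v i := by
  classical
  have h := sum_pin_prod σ T (fun v => ({v} : Finset V)) (fun v ψ => g v (ψ v))
    (fun i _ j _ hij => by simpa [Finset.disjoint_singleton] using hij)
    (fun i hi ψ ψ' hag => by
      show g i (ψ i) = g i (ψ' i)
      rw [hag i (by simp [Finset.mem_sdiff, Finset.sup_singleton_eq_self])])
  rw [Finset.sup_singleton_eq_self] at h
  rw [h]
  exact Finset.prod_congr rfl (fun v _ => sum_pin_single σ v (g v))

variable {W : Type*} [Fintype W]

lemma mem_edgeSupp {F : Finset (Sym2 W)} {v : W} :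
    v ∈ edgeSupp F ↔ ∃ e ∈ F, v ∈ e := by
  simp [edgeSupp]

lemma mem_edgeSupp_of {F : Finset (Sym2 W)} {e : Sym2 W} {v : W} (he : e ∈ F) (hv : v ∈ e) :
    v ∈ edgeSupp F := mem_edgeSupp.mpr ⟨e, he, hv⟩

lemma edgeSupp_sup {𝒥 : Finset (Finset (Sym2 W))} :
    edgeSupp (𝒥.sup id) = 𝒥.sup (fun F => edgeSupp F) := by
  ext v
  simp only [mem_edgeSupp, Finset.mem_sup, id_eq]
  tauto

/-- The connected component of the edge `e` within the edge set `F`. -/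
def compOf (F : Finset (Sym2 W)) (e : Sym2 W) : Finset (Sym2 W) :=
  F.filter fun e' => ∃ u ∈ e, ∃ w ∈ e',
    (SimpleGraph.fromEdgeSet (F : Set (Sym2 W))).Reachable u w

/-- The connected components of the edge set `F`. -/
def comps (F : Finset (Sym2 W)) : Finset (Finset (Sym2 W)) := F.image (compOf F)

lemma mem_compOf {F : Finset (Sym2 W)} {e e' : Sym2 W} :
    e' ∈ compOf F e ↔ e' ∈ F ∧ ∃ u ∈ e, ∃ w ∈ e',
      (SimpleGraph.fromEdgeSet (F : Set (Sym2 W))).Reachable u w := by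
  simp [compOf]

lemma endpoints_reachable {F : Finset (Sym2 W)} (hF : ∀ e ∈ F, ¬ e.IsDiag)
    {e : Sym2 W} (he : e ∈ F) {u w : W} (hu : u ∈ e) (hw : w ∈ e) :
    (SimpleGraph.fromEdgeSet (F : Set (Sym2 W))).Reachable u w := by
  induction e with
  | _ a b =>
    have hab : a ≠ b := by
      have := hF _ he
      rwa [Sym2.mk_isDiag_iff] at this
    have hadj : (SimpleGraph.fromEdgeSet (F : Set (Sym2 W))).Adj a b := by
      rw [SimpleGraph.fromEdgeSet_adj]
      exact ⟨he, hab⟩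
    rw [Sym2.mem_iff] at hu hw
    rcases hu with rfl | rfl <;> rcases hw with rfl | rfl
    · exact SimpleGraph.Reachable.refl _
    · exact hadj.reachable
    · exact hadj.symm.reachable
    · exact SimpleGraph.Reachable.refl _

lemma compOf_eq_compOf {F : Finset (Sym2 W)} (hF : ∀ e ∈ F, ¬ e.IsDiag)
    {e e' : Sym2 W} (he : e ∈ F) (he' : e' ∈ compOf F e) :
    compOf F e' = compOf F e := by
  obtain ⟨he'F, u, hu, w, hw, hr⟩ := mem_compOf.mp he'
  ext e''
  simp only [mem_compOf]
  constructor
  · rintro ⟨h1, a, ha, b, hb, hab⟩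
    exact ⟨h1, u, hu, b, hb, (hr.trans (endpoints_reachable hF he'F hw ha)).trans hab⟩
  · rintro ⟨h1, a, ha, b, hb, hab⟩
    exact ⟨h1, w, hw, b, hb,
      (hr.symm.trans (endpoints_reachable hF he hu ha)).trans hab⟩

lemma self_mem_compOf {F : Finset (Sym2 W)} {e : Sym2 W} (he : e ∈ F) :
    e ∈ compOf F e := by
  induction e with
  | _ a b =>
    exact mem_compOf.mpr ⟨he, a, Sym2.mem_mk_left a b, a, Sym2.mem_mk_left a b,
      SimpleGraph.Reachable.refl a⟩

lemma compOf_subset {F : Finset (Sym2 W)} {e : Sym2 W} : compOf F e ⊆ F :=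
  Finset.filter_subset _ _

lemma sup_comps {F : Finset (Sym2 W)} : (comps F).sup id = F := by
  ext e
  rw [Finset.mem_sup]
  constructor
  · rintro ⟨C, hC, heC⟩
    obtain ⟨e', _, rfl⟩ := Finset.mem_image.mp hC
    exact compOf_subset heC
  · intro he
    exact ⟨compOf F e, Finset.mem_image_of_mem _ he, self_mem_compOf he⟩

lemma walk_edges_mem_compOf {F : Finset (Sym2 W)} {e : Sym2 W} (he : e ∈ F)
    {u w : W}
    (p : (SimpleGraph.fromEdgeSet (F : Set (Sym2 W))).Walk u w) :
    ∀ a ∈ e, (SimpleGraph.fromEdgeSet (F : Set (Sym2 W))).Reachable a u →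
      ∀ e' ∈ p.edges, e' ∈ compOf F e := by
  induction p with
  | nil => simp
  | @cons x y z hadj q ih =>
    intro a ha hr e' he'
    rw [SimpleGraph.Walk.edges_cons, List.mem_cons] at he'
    rcases he' with rfl | he'
    · refine mem_compOf.mpr ⟨?_, a, ha, x, Sym2.mem_mk_left x y, hr⟩
      exact Finset.mem_coe.mp ((SimpleGraph.fromEdgeSet_adj _).mp hadj).1
    · exact ih a ha (hr.trans hadj.reachable) e' he'

omit [Fintype W] in
lemma sym2_exists_mem (e : Sym2 W) : ∃ a, a ∈ e := by
  induction e with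
  | _ a b => exact ⟨a, Sym2.mem_mk_left a b⟩

lemma mem_edges {G : SimpleGraph W} {e : Sym2 W} : e ∈ edges G ↔ e ∈ G.edgeSet := by
  rw [edges, Set.Finite.mem_toFinset]

lemma not_isDiag_of_mem_edges {G : SimpleGraph W} {F : Finset (Sym2 W)}
    (hFG : (F : Set (Sym2 W)) ⊆ G.edgeSet) : ∀ e ∈ F, ¬ e.IsDiag := fun e he =>
  SimpleGraph.not_isDiag_of_mem_edgeSet G (hFG he)

lemma compOf_isPolymer {G : SimpleGraph W} {F : Finset (Sym2 W)}
    (hFG : (F : Set (Sym2 W)) ⊆ G.edgeSet) {e : Sym2 W} (he : e ∈ F) :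
    IsPolymer G (compOf F e) := by
  have hF : ∀ e' ∈ F, ¬ e'.IsDiag := not_isDiag_of_mem_edges hFG
  refine ⟨⟨e, self_mem_compOf he⟩, fun e' he' => hFG (compOf_subset he'), ?_⟩
  -- connectivity
  obtain ⟨a0, ha0⟩ := sym2_exists_mem e
  have reach_of_supp : ∀ u ∈ edgeSupp (compOf F e),
      (SimpleGraph.fromEdgeSet (F : Set (Sym2 W))).Reachable a0 u := by
    intro u hu
    obtain ⟨eu, heu, hueu⟩ := mem_edgeSupp.mp hu
    obtain ⟨heuF, a, ha, b, hb, hab⟩ := mem_compOf.mp heu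
    exact (endpoints_reachable hF he ha0 ha).trans
      (hab.trans (endpoints_reachable hF heuF hb hueu))
  intro u hu w hw
  have hr : (SimpleGraph.fromEdgeSet (F : Set (Sym2 W))).Reachable u w :=
    (reach_of_supp u hu).symm.trans (reach_of_supp w hw)
  obtain ⟨p⟩ := hr
  have hedges : ∀ e' ∈ p.edges,
      e' ∈ (SimpleGraph.fromEdgeSet ((compOf F e : Finset (Sym2 W)) : Set (Sym2 W))).edgeSet := by
    intro e' he'
    rw [SimpleGraph.edgeSet_fromEdgeSet]
    refine ⟨walk_edges_mem_compOf he p a0 ha0 (reach_of_supp u hu) e' he', ?_⟩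
    have := p.edges_subset_edgeSet he'
    rw [SimpleGraph.edgeSet_fromEdgeSet] at this
    exact this.2
  exact ⟨p.transfer _ hedges⟩

lemma comps_suppDisjoint {F : Finset (Sym2 W)} (hF : ∀ e ∈ F, ¬ e.IsDiag) :
    ∀ C₁ ∈ comps F, ∀ C₂ ∈ comps F, C₁ ≠ C₂ → Disjoint (edgeSupp C₁) (edgeSupp C₂) := by
  intro C₁ hC₁ C₂ hC₂ hne
  rw [Finset.disjoint_left]
  intro v hv1 hv2
  obtain ⟨e₁, he₁, rfl⟩ := Finset.mem_image.mp hC₁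
  obtain ⟨e₂, he₂, rfl⟩ := Finset.mem_image.mp hC₂
  obtain ⟨e₁', he₁', hve₁⟩ := mem_edgeSupp.mp hv1
  obtain ⟨e₂', he₂', hve₂⟩ := mem_edgeSupp.mp hv2
  -- e₂' is connected to e₁, so compOf F e₂' = compOf F e₁; likewise = compOf F e₂
  obtain ⟨he₁'F, a, ha, b, hb, hab⟩ := mem_compOf.mp he₁'
  have he₂'F : e₂' ∈ F := compOf_subset he₂'
  have h2in1 : e₂' ∈ compOf F e₁ :=
    mem_compOf.mpr ⟨he₂'F, a, ha,  v, hve₂,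
      hab.trans (endpoints_reachable hF he₁'F hb hve₁)⟩
  exact (hne ((compOf_eq_compOf hF he₁ h2in1).symm.trans
    (compOf_eq_compOf hF he₂ he₂')).symm.symm).elim

lemma walk_stays {𝒥 : Finset (Finset (Sym2 W))}
    (hdisj : ∀ F₁ ∈ 𝒥, ∀ F₂ ∈ 𝒥, F₁ ≠ F₂ → Disjoint (edgeSupp F₁) (edgeSupp F₂))
    {Fi : Finset (Sym2 W)} (hFi : Fi ∈ 𝒥) {u w : W}
    (p : (SimpleGraph.fromEdgeSet ((𝒥.sup id : Finset (Sym2 W)) : Set (Sym2 W))).Walk u w)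
    (hu : u ∈ edgeSupp Fi) : w ∈ edgeSupp Fi := by
  induction p with
  | nil => exact hu
  | @cons x y z hadj q ih =>
    apply ih
    have hxy : s(x, y) ∈ (𝒥.sup id : Finset (Sym2 W)) :=
      Finset.mem_coe.mp ((SimpleGraph.fromEdgeSet_adj _).mp hadj).1
    rw [Finset.mem_sup] at hxy
    obtain ⟨Fj, hFj, hxyFj⟩ := hxy
    have hxFj : x ∈ edgeSupp Fj := mem_edgeSupp_of hxyFj (Sym2.mem_mk_left x y)
    have : Fj = Fi := by
      by_contra hne
      exact Finset.disjoint_left.mp (hdisj Fj hFj Fi hFi hne) hxFj hu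
    subst this
    exact mem_edgeSupp_of hxyFj (Sym2.mem_mk_right x y)

lemma compOf_union_eq {𝒥 : Finset (Finset (Sym2 W))}
    (hpoly : ∀ F ∈ 𝒥, ∃ G : SimpleGraph W, IsPolymer G F)
    (hdisj : ∀ F₁ ∈ 𝒥, ∀ F₂ ∈ 𝒥, F₁ ≠ F₂ → Disjoint (edgeSupp F₁) (edgeSupp F₂))
    {Fi : Finset (Sym2 W)} (hFi : Fi ∈ 𝒥) {e : Sym2 W} (he : e ∈ Fi) :
    compOf (𝒥.sup id) e = Fi := by
  obtain ⟨G, hne, hFG, hconn⟩ := hpoly Fi hFi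
  have hsub : (Fi : Set (Sym2 W)) ⊆ ((𝒥.sup id : Finset (Sym2 W)) : Set (Sym2 W)) := by
    intro e' he'
    rw [Finset.mem_coe, Finset.mem_sup]
    exact ⟨Fi, hFi, he'⟩
  ext e'
  constructor
  · intro he'
    obtain ⟨he'F, a, ha, b, hb, hab⟩ := mem_compOf.mp he'
    have haFi : a ∈ edgeSupp Fi := mem_edgeSupp_of he ha
    obtain ⟨pb⟩ := hab
    have hbFi : b ∈ edgeSupp Fi := walk_stays hdisj hFi pb haFi
    rw [Finset.mem_sup] at he'F
    obtain ⟨Fj, hFj, he'Fj⟩ := he'F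
    have hbFj : b ∈ edgeSupp Fj := mem_edgeSupp_of he'Fj hb
    have : Fj = Fi := by
      by_contra hne'
      exact Finset.disjoint_left.mp (hdisj Fj hFj Fi hFi hne') hbFj hbFi
    subst this
    exact he'Fj
  · intro he'
    refine mem_compOf.mpr ⟨Finset.mem_sup.mpr ⟨Fi, hFi, he'⟩, ?_⟩
    obtain ⟨a, ha⟩ := sym2_exists_mem e
    obtain ⟨b, hb⟩ := sym2_exists_mem e'
    refine ⟨a, ha, b, hb, SimpleGraph.Reachable.mono
      (SimpleGraph.fromEdgeSet_mono hsub) ?_⟩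
    exact hconn a (mem_edgeSupp_of he ha) b (mem_edgeSupp_of he' hb)

lemma comps_union_eq {𝒥 : Finset (Finset (Sym2 W))}
    (hpoly : ∀ F ∈ 𝒥, ∃ G : SimpleGraph W, IsPolymer G F)
    (hdisj : ∀ F₁ ∈ 𝒥, ∀ F₂ ∈ 𝒥, F₁ ≠ F₂ → Disjoint (edgeSupp F₁) (edgeSupp F₂)) :
    comps (𝒥.sup id) = 𝒥 := by
  ext C
  constructor
  · intro hC
    obtain ⟨e, he, rfl⟩ := Finset.mem_image.mp hC
    rw [Finset.mem_sup] at he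
    obtain ⟨Fi, hFi, heFi⟩ := he
    rw [compOf_union_eq hpoly hdisj hFi heFi]
    exact hFi
  · intro hC
    obtain ⟨G, ⟨e, he⟩, _, _⟩ := hpoly C hC
    rw [← compOf_union_eq hpoly hdisj hC he]
    exact Finset.mem_image_of_mem _ (Finset.mem_sup.mpr ⟨C, hC, he⟩)

lemma edges_disjoint_of_supp {F₁ F₂ : Finset (Sym2 W)}
    (h : Disjoint (edgeSupp F₁) (edgeSupp F₂)) : Disjoint F₁ F₂ := by
  rw [Finset.disjoint_left]
  intro e he1 he2
  obtain ⟨a, ha⟩ := sym2_exists_mem e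
  exact Finset.disjoint_left.mp h (mem_edgeSupp_of he1 ha) (mem_edgeSupp_of he2 ha)

omit [Fintype W] in
lemma edgeWeight_congr (B : Matrix (Fin q) (Fin q) ℂ) {ψ ψ' : W → Fin q} {e : Sym2 W}
    (h : ∀ v ∈ e, ψ v = ψ' v) : edgeWeight B ψ e = edgeWeight B ψ' e := by
  induction e with
  | _ a b =>
    simp only [edgeWeight, Sym2.lift_mk]
    rw [show ψ a = ψ' a from h a (Sym2.mem_mk_left a b),
      show ψ b = ψ' b from h b (Sym2.mem_mk_right a b)]

omit [Fintype W] in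
lemma edgeWeight_one_add (A : Matrix (Fin q) (Fin q) ℂ) (z : ℂ) (ψ : W → Fin q) (e : Sym2 W) :
    edgeWeight (fun i j => 1 + z * (A i j - 1)) ψ e =
      1 + z * edgeWeight (fun i j => A i j - 1) ψ e := by
  induction e with
  | _ a b =>
    show (_ + _) / 2 = 1 + z * ((_ + _) / 2)
    ring

lemma Zsub_eq_pin (B : Matrix (Fin q) (Fin q) ℂ) (S : Finset W) (F : Finset (Sym2 W))
    (Λ : Finset W) (σ : W → Fin q) (ξ : W → Fin q → ℂ) :
    Zsub B S F Λ σ ξ = ∑ ψ : W → Fin q,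
      if ∀ u, u ∉ S \ Λ → ψ u = σ u then
        (∏ v ∈ S, ξ v (ψ v)) * ∏ e ∈ F, edgeWeight B ψ e
      else 0 := by
  refine Finset.sum_congr rfl fun ψ _ => ?_
  refine if_congr ?_ rfl rfl
  constructor
  · rintro ⟨h1, h2⟩ u hu
    rw [Finset.mem_sdiff] at hu
    push_neg at hu
    by_cases hS : u ∈ S
    · exact h1 u (Finset.mem_inter.mpr ⟨hu hS, hS⟩)
    · exact h2 u hS
  · intro h
    constructor
    · intro u hu
      rw [Finset.mem_inter] at hu
      exact h u (by rw [Finset.mem_sdiff]; tauto)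
    · intro u hu
      exact h u (by rw [Finset.mem_sdiff]; tauto)

/-- Step B: factorization of the pinned sum for a fixed edge set `F`. -/
lemma TF_eq (B : Matrix (Fin q) (Fin q) ℂ) (Λ : Finset W) (σ : W → Fin q)
    (ξ : W → Fin q → ℂ) (F : Finset (Sym2 W)) :
    (∑ ψ : W → Fin q, if ∀ u ∈ Λ, ψ u = σ u then
        (∏ v, ξ v (ψ v)) * ∏ e ∈ F, edgeWeight B ψ e else 0) =
    ((∏ v ∈ univ \ (edgeSupp F ∪ Λ), ∑ i, ξ v i) * ∏ v ∈ Λ \ edgeSupp F, ξ v (σ v)) *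
      Zsub B (edgeSupp F) F Λ σ ξ := by
  classical
  set S := edgeSupp F with hS
  set T₁ := S \ Λ with hT₁
  set T₂ := univ \ (S ∪ Λ) with hT₂
  have hd : Disjoint T₁ T₂ := by
    rw [Finset.disjoint_left]
    intro v hv1 hv2
    rw [hT₁, Finset.mem_sdiff] at hv1
    rw [hT₂, Finset.mem_sdiff, Finset.mem_union] at hv2
    exact hv2.2 (Or.inl hv1.1)
  have key := sum_pin_mul σ T₁ T₂ hd
    (fun ψ => (∏ v ∈ S, ξ v (ψ v)) * ∏ e ∈ F, edgeWeight B ψ e)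
    (fun ψ => ∏ v ∈ univ \ S, ξ v (ψ v))
    (fun ψ ψ' hag => by
      have hagS : ∀ v ∈ S, ψ v = ψ' v := fun v hv => hag v (fun hv2 => by
        rw [hT₂, Finset.mem_sdiff, Finset.mem_union] at hv2
        exact hv2.2 (Or.inl hv))
      refine congrArg₂ _ (Finset.prod_congr rfl fun v hv => by rw [hagS v hv]) ?_
      exact Finset.prod_congr rfl fun e he => edgeWeight_congr B
        (fun v hv => hagS v (mem_edgeSupp_of he hv)))
    (fun ψ ψ' hag => Finset.prod_congr rfl fun v hv => by
      rw [hag v (fun hv1 => by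
        rw [Finset.mem_sdiff] at hv
        exact hv.2 (Finset.mem_sdiff.mp hv1).1)])
  have hpin : ∀ ψ : W → Fin q, (∀ u ∈ Λ, ψ u = σ u) ↔
      (∀ u, u ∉ T₁ → u ∉ T₂ → ψ u = σ u) := by
    intro ψ
    constructor
    · intro h u h1 h2
      rw [hT₁, Finset.mem_sdiff] at h1
      rw [hT₂, Finset.mem_sdiff, Finset.mem_union] at h2
      push_neg at h1 h2
      by_cases hu : u ∈ S
      · exact h u (h1 hu)
      · exact h u ((h2 (Finset.mem_univ u)).resolve_left hu)
    · intro h u hu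
      refine h u ?_ ?_
      · rw [hT₁, Finset.mem_sdiff]; tauto
      · rw [hT₂, Finset.mem_sdiff, Finset.mem_union]; tauto
  have lhsEq : (∑ ψ : W → Fin q, if ∀ u ∈ Λ, ψ u = σ u then
        (∏ v, ξ v (ψ v)) * ∏ e ∈ F, edgeWeight B ψ e else 0) =
      (∑ ψ : W → Fin q, if ∀ u, u ∉ T₁ → u ∉ T₂ → ψ u = σ u then
        ((∏ v ∈ S, ξ v (ψ v)) * ∏ e ∈ F, edgeWeight B ψ e) *
          (∏ v ∈ univ \ S, ξ v (ψ v)) else 0) := by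
    refine Finset.sum_congr rfl fun ψ _ => ?_
    refine if_congr (hpin ψ) ?_ rfl
    rw [← Finset.prod_sdiff (Finset.subset_univ S)]
    ring
  rw [lhsEq, key]
  -- second factor
  have hsplit : univ \ S = T₂ ∪ (Λ \ S) := by
    ext v
    rw [hT₂]
    simp only [Finset.mem_sdiff, Finset.mem_union, Finset.mem_univ, true_and]
    tauto
  have hdisj2 : Disjoint T₂ (Λ \ S) := by
    rw [Finset.disjoint_left]
    intro v hv1 hv2
    rw [hT₂, Finset.mem_sdiff, Finset.mem_union] at hv1
    rw [Finset.mem_sdiff] at hv2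
    exact hv1.2 (Or.inr hv2.1)
  have snd : (∑ ψ : W → Fin q, if ∀ u, u ∉ T₂ → ψ u = σ u then
      ∏ v ∈ univ \ S, ξ v (ψ v) else 0) =
      (∏ v ∈ T₂, ∑ i, ξ v i) * ∏ v ∈ Λ \ S, ξ v (σ v) := by
    have step : ∀ ψ : W → Fin q, (∀ u, u ∉ T₂ → ψ u = σ u) →
        ∏ v ∈ univ \ S, ξ v (ψ v) =
          (∏ v ∈ T₂, ξ v (ψ v)) * ∏ v ∈ Λ \ S, ξ v (σ v) := by
      intro ψ hψ
      rw [hsplit, Finset.prod_union hdisj2]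
      refine congrArg _ (Finset.prod_congr rfl fun v hv => ?_)
      rw [hψ v (Finset.disjoint_right.mp hdisj2 hv)]
    calc (∑ ψ : W → Fin q, if ∀ u, u ∉ T₂ → ψ u = σ u then
          ∏ v ∈ univ \ S, ξ v (ψ v) else 0)
        = ∑ ψ : W → Fin q, (if ∀ u, u ∉ T₂ → ψ u = σ u then
            ∏ v ∈ T₂, ξ v (ψ v) else 0) * ∏ v ∈ Λ \ S, ξ v (σ v) := by
          refine Finset.sum_congr rfl fun ψ _ => ?_
          by_cases h : ∀ u, u ∉ T₂ → ψ u = σ u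
          · rw [if_pos h, if_pos h, step ψ h]
          · rw [if_neg h, if_neg h, zero_mul]
      _ = (∏ v ∈ T₂, ∑ i, ξ v i) * ∏ v ∈ Λ \ S, ξ v (σ v) := by
          rw [← Finset.sum_mul, sum_pin_field σ T₂ ξ]
  rw [snd, Zsub_eq_pin]
  ring

lemma suppSdiff_biUnion {𝒥 : Finset (Finset (Sym2 W))} (Λ : Finset W) :
    edgeSupp (𝒥.sup id) \ Λ = 𝒥.biUnion (fun Fi => edgeSupp Fi \ Λ) := by
  ext v
  rw [Finset.mem_sdiff, edgeSupp_sup, Finset.mem_sup, Finset.mem_biUnion]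
  simp only [Finset.mem_sdiff]
  tauto

lemma suppInter_biUnion {𝒥 : Finset (Finset (Sym2 W))} (Λ : Finset W)
    (hdisj : ∀ F₁ ∈ 𝒥, ∀ F₂ ∈ 𝒥, F₁ ≠ F₂ → Disjoint (edgeSupp F₁) (edgeSupp F₂)) :
    Λ ∩ edgeSupp (𝒥.sup id) = 𝒥.biUnion (fun Fi => Λ ∩ edgeSupp Fi) := by
  ext v
  rw [Finset.mem_inter, edgeSupp_sup, Finset.mem_sup, Finset.mem_biUnion]
  simp only [Finset.mem_inter]
  tauto

lemma Zsub_factor (B : Matrix (Fin q) (Fin q) ℂ) (𝒥 : Finset (Finset (Sym2 W)))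
    (Λ : Finset W) (σ : W → Fin q) (ξ : W → Fin q → ℂ)
    (hdisj : ∀ F₁ ∈ 𝒥, ∀ F₂ ∈ 𝒥, F₁ ≠ F₂ → Disjoint (edgeSupp F₁) (edgeSupp F₂)) :
    Zsub B (edgeSupp (𝒥.sup id)) (𝒥.sup id) Λ σ ξ =
      ∏ Fi ∈ 𝒥, Zsub B (edgeSupp Fi) Fi Λ σ ξ := by
  classical
  have hpwSupp : (↑𝒥 : Set (Finset (Sym2 W))).PairwiseDisjoint edgeSupp :=
    fun F₁ h1 F₂ h2 hne => hdisj F₁ h1 F₂ h2 hne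
  have hpwSuppΛ : (↑𝒥 : Set (Finset (Sym2 W))).PairwiseDisjoint
      (fun Fi => edgeSupp Fi \ Λ) := fun F₁ h1 F₂ h2 hne =>
    Finset.disjoint_of_subset_left (Finset.sdiff_subset)
      (Finset.disjoint_of_subset_right (Finset.sdiff_subset) (hdisj F₁ h1 F₂ h2 hne))
  have hpwEdges : (↑𝒥 : Set (Finset (Sym2 W))).PairwiseDisjoint id :=
    fun F₁ h1 F₂ h2 hne => edges_disjoint_of_supp (hdisj F₁ h1 F₂ h2 hne)
  have hsuppBi : edgeSupp (𝒥.sup id) = 𝒥.biUnion (fun Fi => edgeSupp Fi) := by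
    rw [edgeSupp_sup, Finset.sup_eq_biUnion]
  have hsupT : 𝒥.sup (fun Fi => edgeSupp Fi \ Λ) = edgeSupp (𝒥.sup id) \ Λ :=
    (suppSdiff_biUnion Λ).symm ▸ (Finset.sup_eq_biUnion _ _)
  rw [Zsub_eq_pin]
  have key := sum_pin_prod σ 𝒥 (fun Fi => edgeSupp Fi \ Λ)
    (fun Fi ψ => (∏ v ∈ edgeSupp Fi, ξ v (ψ v)) * ∏ e ∈ Fi, edgeWeight B ψ e)
    hpwSuppΛ
    (fun Fi hFi ψ ψ' hag => by
      have hagS : ∀ v ∈ edgeSupp Fi, ψ v = ψ' v := by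
        intro v hv
        refine hag v ?_
        rw [Finset.mem_sdiff, Finset.mem_sup]
        rintro ⟨⟨Fj, hFj, hvFj⟩, hvi⟩
        rw [Finset.mem_sdiff] at hvFj hvi
        push_neg at hvi
        by_cases hji : Fj = Fi
        · subst hji; exact hvFj.2 (hvi hv)
        · exact Finset.disjoint_left.mp (hdisj Fj hFj Fi hFi hji) hvFj.1 hv
      refine congrArg₂ _ (Finset.prod_congr rfl fun v hv => by rw [hagS v hv]) ?_
      exact Finset.prod_congr rfl fun e he => edgeWeight_congr B
        (fun v hv => hagS v (mem_edgeSupp_of he hv)))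
  rw [hsupT] at key
  have lhsEq : (∑ ψ : W → Fin q, if ∀ u, u ∉ edgeSupp (𝒥.sup id) \ Λ → ψ u = σ u then
      (∏ v ∈ edgeSupp (𝒥.sup id), ξ v (ψ v)) * ∏ e ∈ 𝒥.sup id, edgeWeight B ψ e else 0)
      = ∑ ψ : W → Fin q, if ∀ u, u ∉ edgeSupp (𝒥.sup id) \ Λ → ψ u = σ u then
        ∏ Fi ∈ 𝒥, ((∏ v ∈ edgeSupp Fi, ξ v (ψ v)) * ∏ e ∈ Fi, edgeWeight B ψ e) else 0 := by
    refine Finset.sum_congr rfl fun ψ _ => ?_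
    refine if_congr Iff.rfl ?_ rfl
    rw [Finset.prod_mul_distrib, hsuppBi, Finset.prod_biUnion hpwSupp,
      show (𝒥.sup id : Finset (Sym2 W)) = 𝒥.biUnion id from Finset.sup_eq_biUnion _ _,
      Finset.prod_biUnion hpwEdges]
    rfl
  rw [lhsEq, key]
  exact Finset.prod_congr rfl fun Fi _ => (Zsub_eq_pin B _ _ _ _ _).symm

lemma master {G : SimpleGraph W} (A : Matrix (Fin q) (Fin q) ℂ) (z : ℂ) (Λ : Finset W)
    (σ : W → Fin q) (ξ : W → Fin q → ℂ)
    (hξsum : ∀ v : W, (∑ i, ξ v i) ≠ 0) (hξΛ : ∀ v ∈ Λ, ξ v (σ v) ≠ 0)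
    (𝒥 : Finset (Finset (Sym2 W)))
    (hpoly : ∀ F ∈ 𝒥, IsPolymer G F)
    (hdisj : ∀ F₁ ∈ 𝒥, ∀ F₂ ∈ 𝒥, F₁ ≠ F₂ → Disjoint (edgeSupp F₁) (edgeSupp F₂)) :
    pBC Λ σ ξ * ∏ Fi ∈ 𝒥, polymerWeight A z Λ σ ξ Fi =
      z ^ (𝒥.sup id).card *
      (((∏ v ∈ univ \ (edgeSupp (𝒥.sup id) ∪ Λ), ∑ i, ξ v i) *
        ∏ v ∈ Λ \ edgeSupp (𝒥.sup id), ξ v (σ v)) *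
       Zsub (fun i j => A i j - 1) (edgeSupp (𝒥.sup id)) (𝒥.sup id) Λ σ ξ) := by
  classical
  set S := edgeSupp (𝒥.sup id) with hSdef
  have hpwSuppΛ : (↑𝒥 : Set (Finset (Sym2 W))).PairwiseDisjoint
      (fun Fi => edgeSupp Fi \ Λ) := fun F₁ h1 F₂ h2 hne =>
    Finset.disjoint_of_subset_left (Finset.sdiff_subset)
      (Finset.disjoint_of_subset_right (Finset.sdiff_subset) (hdisj F₁ h1 F₂ h2 hne))
  have hpwSuppΛ' : (↑𝒥 : Set (Finset (Sym2 W))).PairwiseDisjoint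
      (fun Fi => Λ ∩ edgeSupp Fi) := fun F₁ h1 F₂ h2 hne =>
    Finset.disjoint_of_subset_left (Finset.inter_subset_right)
      (Finset.disjoint_of_subset_right (Finset.inter_subset_right) (hdisj F₁ h1 F₂ h2 hne))
  have hpwEdges : (↑𝒥 : Set (Finset (Sym2 W))).PairwiseDisjoint id :=
    fun F₁ h1 F₂ h2 hne => edges_disjoint_of_supp (hdisj F₁ h1 F₂ h2 hne)
  -- denominators
  set D : Finset (Sym2 W) → ℂ := fun Fi =>
    (∏ v ∈ edgeSupp Fi \ Λ, ∑ i, ξ v i) * ∏ v ∈ Λ ∩ edgeSupp Fi, ξ v (σ v) with hD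
  have hDne : ∀ Fi ∈ 𝒥, D Fi ≠ 0 := by
    intro Fi _
    refine mul_ne_zero (Finset.prod_ne_zero_iff.mpr fun v _ => hξsum v)
      (Finset.prod_ne_zero_iff.mpr fun v hv => hξΛ v (Finset.mem_inter.mp hv).1)
  have hprodW : (∏ Fi ∈ 𝒥, polymerWeight A z Λ σ ξ Fi) =
      (∏ Fi ∈ 𝒥, z ^ Fi.card * Zsub (fun i j => A i j - 1) (edgeSupp Fi) Fi Λ σ ξ) /
        ∏ Fi ∈ 𝒥, D Fi := by
    rw [← Finset.prod_div_distrib]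
    exact Finset.prod_congr rfl fun Fi _ => rfl
  -- pBC factorization
  have hsplit1 : univ \ Λ = (univ \ (S ∪ Λ)) ∪ (S \ Λ) := by
    ext v
    simp only [Finset.mem_sdiff, Finset.mem_union, Finset.mem_univ, true_and]
    tauto
  have hdisj1 : Disjoint (univ \ (S ∪ Λ)) (S \ Λ) := by
    rw [Finset.disjoint_left]
    intro v h1 h2
    simp only [Finset.mem_sdiff, Finset.mem_union, Finset.mem_univ, true_and] at h1 h2
    exact h1 (Or.inl h2.1)
  have hsplit2 : Λ = (Λ \ S) ∪ (Λ ∩ S) := (Finset.sdiff_union_inter Λ S).symm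
  have hdisj2 : Disjoint (Λ \ S) (Λ ∩ S) := by
    rw [Finset.disjoint_left]
    intro v h1 h2
    rw [Finset.mem_sdiff] at h1
    rw [Finset.mem_inter] at h2
    exact h1.2 h2.2
  have hpBC : pBC Λ σ ξ =
      (((∏ v ∈ univ \ (S ∪ Λ), ∑ i, ξ v i) * ∏ v ∈ Λ \ S, ξ v (σ v)) *
        ∏ Fi ∈ 𝒥, D Fi) := by
    rw [pBC, hsplit1, Finset.prod_union hdisj1]
    nth_rewrite 3 [hsplit2]
    rw [Finset.prod_union hdisj2]
    rw [show S \ Λ = 𝒥.biUnion (fun Fi => edgeSupp Fi \ Λ) from suppSdiff_biUnion Λ,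
      show Λ ∩ S = 𝒥.biUnion (fun Fi => Λ ∩ edgeSupp Fi) from suppInter_biUnion Λ hdisj,
      Finset.prod_biUnion hpwSuppΛ, Finset.prod_biUnion hpwSuppΛ', hD,
      Finset.prod_mul_distrib]
    ring
  have hcard : (𝒥.sup id).card = ∑ Fi ∈ 𝒥, Fi.card := by
    rw [Finset.sup_eq_biUnion]
    exact Finset.card_biUnion fun F₁ h1 F₂ h2 hne => hpwEdges h1 h2 hne
  have hne : (∏ Fi ∈ 𝒥, D Fi) ≠ 0 := Finset.prod_ne_zero_iff.mpr hDne
  have hNeq : (∏ Fi ∈ 𝒥, z ^ Fi.card * Zsub (fun i j => A i j - 1) (edgeSupp Fi) Fi Λ σ ξ)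
      = (z ^ ∑ Fi ∈ 𝒥, Fi.card) *
        ∏ Fi ∈ 𝒥, Zsub (fun i j => A i j - 1) (edgeSupp Fi) Fi Λ σ ξ := by
    rw [Finset.prod_mul_distrib, Finset.prod_pow_eq_pow_sum]
  rw [hprodW, hpBC, hcard, hSdef, Zsub_factor (fun i j => A i j - 1) _ _ _ _ hdisj, hNeq, mul_div_assoc',
    mul_comm, mul_div_assoc, mul_div_assoc]
  rw [div_self hne, mul_one]
  ring

lemma stepA {G : SimpleGraph W} (A : Matrix (Fin q) (Fin q) ℂ) (z : ℂ) (Λ : Finset W)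
    (σ : W → Fin q) (ξ : W → Fin q → ℂ) :
    Zext G (fun i j => 1 + z * (A i j - 1)) Λ σ ξ =
      ∑ F ∈ (edges G).powerset, z ^ F.card *
        ∑ ψ : W → Fin q, if ∀ u ∈ Λ, ψ u = σ u then
          (∏ v, ξ v (ψ v)) * ∏ e ∈ F, edgeWeight (fun i j => A i j - 1) ψ e else 0 := by
  classical
  have expand : ∀ ψ : W → Fin q,
      (∏ e ∈ edges G, edgeWeight (fun i j => 1 + z * (A i j - 1)) ψ e)
      = ∑ F ∈ (edges G).powerset, z ^ F.card *
          ∏ e ∈ F, edgeWeight (fun i j => A i j - 1) ψ e := by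
    intro ψ
    calc (∏ e ∈ edges G, edgeWeight (fun i j => 1 + z * (A i j - 1)) ψ e)
        = ∏ e ∈ edges G, (z * edgeWeight (fun i j => A i j - 1) ψ e + 1) := by
          refine Finset.prod_congr rfl fun e _ => ?_
          rw [edgeWeight_one_add]; ring
      _ = ∑ F ∈ (edges G).powerset,
            (∏ e ∈ F, z * edgeWeight (fun i j => A i j - 1) ψ e) *
            ∏ e ∈ edges G \ F, 1 := Finset.prod_add _ _ _
      _ = ∑ F ∈ (edges G).powerset, z ^ F.card *
            ∏ e ∈ F, edgeWeight (fun i j => A i j - 1) ψ e := by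
          refine Finset.sum_congr rfl fun F _ => ?_
          rw [Finset.prod_const_one, mul_one, Finset.prod_mul_distrib,
            Finset.prod_const]
  have h1 : Zext G (fun i j => 1 + z * (A i j - 1)) Λ σ ξ =
      ∑ ψ : W → Fin q, ∑ F ∈ (edges G).powerset,
        if ∀ u ∈ Λ, ψ u = σ u then z ^ F.card *
          ((∏ v, ξ v (ψ v)) * ∏ e ∈ F, edgeWeight (fun i j => A i j - 1) ψ e) else 0 := by
    unfold Zext
    refine Finset.sum_congr rfl fun ψ _ => ?_
    by_cases h : ∀ u ∈ Λ, ψ u = σ u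
    · rw [if_pos h, expand ψ, Finset.mul_sum]
      refine Finset.sum_congr rfl fun F _ => ?_
      rw [if_pos h]; ring
    · rw [if_neg h, eq_comm]
      exact Finset.sum_eq_zero fun F _ => if_neg h
  rw [h1, Finset.sum_comm]
  refine Finset.sum_congr rfl fun F _ => ?_
  rw [Finset.mul_sum]
  refine Finset.sum_congr rfl fun ψ _ => ?_
  by_cases h : ∀ u ∈ Λ, ψ u = σ u
  · rw [if_pos h, if_pos h]
  · rw [if_neg h, if_neg h, mul_zero]


end Aux

/-- With the polymer weights `w^σ` above, for any symmetric complex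
`q × q` matrix `A`, any finite graph `G`, any boundary condition `σ` on `Λ ⊆ V`, any
`z ∈ ℂ` and any external fields `ξ` for which all denominators are nonzero:
`p^σ(ξ) · Z_Γ(w^σ) = Z^σ_G(J + z(A−J), ξ)`. -/
theorem polymer_identity {q : ℕ} (hq : 2 ≤ q)
    (A : Matrix (Fin q) (Fin q) ℂ) (hA : ∀ i j, A i j = A j i)
    (G : SimpleGraph V) (Λ : Finset V) (σ : V → Fin q) (z : ℂ)
    (ξ : V → Fin q → ℂ)
    (hξsum : ∀ v : V, (∑ i, ξ v i) ≠ 0) (hξΛ : ∀ v ∈ Λ, ξ v (σ v) ≠ 0) :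
    pBC Λ σ ξ * Zpolymer G (polymerWeight A z Λ σ ξ) =
      Zext G (fun i j => 1 + z * (A i j - 1)) Λ σ ξ := by
  classical
  rw [stepA A z Λ σ ξ]
  have hRHS : pBC Λ σ ξ * Zpolymer G (polymerWeight A z Λ σ ξ) =
      ∑ 𝒥 ∈ univ.filter (fun 𝒥 : Finset (Finset (Sym2 V)) =>
        (∀ F ∈ 𝒥, IsPolymer G F) ∧
        (∀ F₁ ∈ 𝒥, ∀ F₂ ∈ 𝒥, F₁ ≠ F₂ → Disjoint (edgeSupp F₁) (edgeSupp F₂))),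
        pBC Λ σ ξ * ∏ F ∈ 𝒥, polymerWeight A z Λ σ ξ F := by
    rw [Zpolymer, Finset.mul_sum, Finset.sum_filter]
    refine Finset.sum_congr rfl fun 𝒥 _ => ?_
    by_cases h : (∀ F ∈ 𝒥, IsPolymer G F) ∧
        (∀ F₁ ∈ 𝒥, ∀ F₂ ∈ 𝒥, F₁ ≠ F₂ → Disjoint (edgeSupp F₁) (edgeSupp F₂))
    · rw [if_pos h, if_pos h]
    · rw [if_neg h, if_neg h, mul_zero]
  rw [hRHS]
  refine Finset.sum_nbij' (fun 𝒥 => 𝒥.sup id) (fun F => comps F) ?_ ?_ ?_ ?_ ?_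
  · intro 𝒥 h𝒥
    rw [Finset.mem_filter] at h𝒥
    rw [Finset.mem_powerset]
    intro e he
    rw [Finset.mem_sup] at he
    obtain ⟨Fi, hFi, heFi⟩ := he
    exact mem_edges.mpr ((h𝒥.2.1 Fi hFi).2.1 heFi)
  · intro F hF
    rw [Finset.mem_powerset] at hF
    have hFG : (F : Set (Sym2 V)) ⊆ G.edgeSet := fun e he =>
      mem_edges.mp (hF (Finset.mem_coe.mp he))
    rw [Finset.mem_filter]
    refine ⟨Finset.mem_univ _, ?_, comps_suppDisjoint (not_isDiag_of_mem_edges hFG)⟩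
    intro C hC
    obtain ⟨e, he, rfl⟩ := Finset.mem_image.mp hC
    exact compOf_isPolymer hFG he
  · intro 𝒥 h𝒥
    rw [Finset.mem_filter] at h𝒥
    exact comps_union_eq (fun F hF => ⟨G, h𝒥.2.1 F hF⟩) h𝒥.2.2
  · intro F _
    exact sup_comps
  · intro 𝒥 h𝒥
    rw [Finset.mem_filter] at h𝒥
    rw [master A z Λ σ ξ hξsum hξΛ 𝒥 h𝒥.2.1 h𝒥.2.2,
      TF_eq (fun i j => A i j - 1) Λ σ ξ (𝒥.sup id)]

end GraphHom

end
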